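/- Let d ≥ 2, let S ⊆ ℝ be an open set, and let φ : S → [0,∞) be either (i) a linear polynomial that is nonnegative on S, or (ii) the square root of a polynomial of degree at most 2 that is nonnegative on S. Let w ≥ 0 be a weight on S with all moments ∫_S |t|^k φ(t)^{d−1} w(t) dt finite and ∫_S φ(t)^{d−1} w(t) dt > 0, and suppose that polynomials of one variable of each degree n that are orthogonal with respect to the weight φ(t)^{2m+d−1} w(t) on S exist for every m; denote by q_n^{(m)} such an orthogonal polynomial of degree n. Let {Y_ℓ^m : 1 ≤ ℓ ≤ dim H_m^d} be a basis of the space H_m^d of spherical harmonics of degree m in d variables (harmonic polynomials on ℝ^d homogeneous of degree m) that is orthonormal with respect to the normalized surface measure dσ/ω_d on the unit sphere S^{d−1}, where ω_d is the surface area of S^{d−1}. Define S_{m,ℓ}^n(x,t) := q_{n−m}^{(m)}(t) · φ(t)^m · Y_ℓ^m(x/φ(t)) for 0 ≤ m ≤ n and 1 ≤ ℓ ≤ dim H_m^d. Then: (1) S_{m,ℓ}^n(x,t) = q_{n−m}^{(m)}(t) Y_ℓ^m(x), so S_{m,ℓ}^n is a polynomial of degree at most n in (x,t); and (2) ⟨S_{m,ℓ}^n,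 S_{m',ℓ'}^{n'}⟩_w = h_m^n δ_{n,n'} δ_{m,m'} δ_{ℓ,ℓ'}, where ⟨f,g⟩_w := c_w ∫_S φ(t)^{d−1} (∫_{S^{d−1}} f(φ(t)ξ, t) g(φ(t)ξ, t) dσ(ξ)) w(t) dt with c_w normalized so that ⟨1,1⟩_w = 1, and h_m^n = c_w ω_d ∫_S [q_{n−m}^{(m)}(t)]² φ(t)^{2m+d−1} w(t) dt > 0. -/

import Mathlib

open MeasureTheory MvPolynomial

noncomputable section

/-- The surface measure `dσ` on the unit sphere `S^{d−1} ⊆ ℝ^d`. -/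
def sphMeas (d : ℕ) : Measure (Metric.sphere (0 : EuclideanSpace ℝ (Fin d)) 1) :=
  (volume : Measure (EuclideanSpace ℝ (Fin d))).toSphere

/-- The surface area `ω_d` of the unit sphere `S^{d−1} ⊆ ℝ^d`. -/
def sphArea (d : ℕ) : ℝ := ((sphMeas d) Set.univ).toReal

/-- The Laplace operator on polynomials in `d` variables. -/
def laplacianLM (d : ℕ) : MvPolynomial (Fin d) ℝ →ₗ[ℝ] MvPolynomial (Fin d) ℝ :=
  ∑ i : Fin d, ((MvPolynomial.pderiv i).toLinearMap ∘ₗ (MvPolynomial.pderiv i).toLinearMap)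

/-- `dim H_m^d`, the dimension of the space of spherical harmonics of degree `m` in `d`
variables (homogeneous harmonic polynomials of degree `m`). -/
def harmDim (d m : ℕ) : ℕ :=
  Module.finrank ℝ
    ↥(MvPolynomial.homogeneousSubmodule (Fin d) ℝ m ⊓ LinearMap.ker (laplacianLM d))

lemma homog_eval_smul {d m : ℕ} {p : MvPolynomial (Fin d) ℝ} (hp : p.IsHomogeneous m)
    (c : ℝ) (x : Fin d → ℝ) :
    MvPolynomial.eval (c • x) p = c ^ m * MvPolynomial.eval x p := by
  have hx : (c • x) = fun i => c * x i := by funext i; simp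
  rw [hx, eval_eq, eval_eq, Finset.mul_sum]
  refine Finset.sum_congr rfl fun s hs => ?_
  have h1 : (Finsupp.weight 1) s = m := hp (MvPolynomial.mem_support_iff.mp hs)
  have hdeg : ∑ i ∈ s.support, s i = m := by
    have e : Finsupp.degree s = Finsupp.weight 1 s := DFunLike.congr_fun Finsupp.degree_eq_weight_one s
    rw [← h1, ← e]
    rfl
  calc MvPolynomial.coeff s p * ∏ i ∈ s.support, (c * x i) ^ s i
      = MvPolynomial.coeff s p *
        ((∏ i ∈ s.support, c ^ s i) * ∏ i ∈ s.support, x i ^ s i) := by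
        rw [← Finset.prod_mul_distrib]; simp [mul_pow]
    _ = c ^ m * (MvPolynomial.coeff s p * ∏ i ∈ s.support, x i ^ s i) := by
        rw [Finset.prod_pow_eq_pow_sum, hdeg]; ring

/-- Orthogonal polynomials on a quadratic surface of revolution: with
`S_{m,ℓ}^n(x,t) = q_{n−m}^{(m)}(t) φ(t)^m Y_ℓ^m(x/φ(t))`, one has
`S_{m,ℓ}^n(x,t) = q_{n−m}^{(m)}(t) Y_ℓ^m(x)`, a polynomial of degree at most `n`, and
`⟨S_{m,ℓ}^n, S_{m',ℓ'}^{n'}⟩_w = h_m^n δ_{n,n'} δ_{m,m'} δ_{ℓ,ℓ'}` with `h_m^n > 0`. -/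
theorem surface_orthogonal_basis
    (d : ℕ) (hd : 2 ≤ d)
    (Sset : Set ℝ) (hSopen : IsOpen Sset)
    (φ : ℝ → ℝ) (hφ0 : ∀ t ∈ Sset, 0 ≤ φ t)
    (hφ : (∃ c1 c0 : ℝ, ∀ t ∈ Sset, φ t = c1 * t + c0) ∨
      (∃ c2 c1 c0 : ℝ, (∀ t ∈ Sset, 0 ≤ c2 * t ^ 2 + c1 * t + c0) ∧
        ∀ t ∈ Sset, φ t = Real.sqrt (c2 * t ^ 2 + c1 * t + c0)))
    (w : ℝ → ℝ) (hw0 : ∀ t ∈ Sset, 0 ≤ w t)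
    (hmom : ∀ k : ℕ, IntegrableOn (fun t => |t| ^ k * (φ t) ^ (d - 1) * w t) Sset)
    (hmass : 0 < ∫ t in Sset, (φ t) ^ (d - 1) * w t)
    -- the orthogonal polynomials `q_j^{(m)}` with respect to `φ(t)^{2m+d−1} w(t)` on `S`
    (q : ℕ → ℕ → Polynomial ℝ)
    (hqdeg : ∀ m j, (q m j).degree = j)
    (hqorth : ∀ m j k, k < j →
      ∫ t in Sset, (q m j).eval t * t ^ k * (φ t) ^ (2 * m + d - 1) * w t = 0)
    -- an orthonormal basis of spherical harmonics `Y_ℓ^m`, `1 ≤ ℓ ≤ dim H_m^d`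
    (Y : ℕ → ℕ → MvPolynomial (Fin d) ℝ)
    (hYhom : ∀ m ℓ, ℓ ∈ Finset.Icc 1 (harmDim d m) → (Y m ℓ).IsHomogeneous m)
    (hYharm : ∀ m ℓ, ℓ ∈ Finset.Icc 1 (harmDim d m) → laplacianLM d (Y m ℓ) = 0)
    (hYorth : ∀ m ℓ m' ℓ', ℓ ∈ Finset.Icc 1 (harmDim d m) →
      ℓ' ∈ Finset.Icc 1 (harmDim d m') →
      (sphArea d)⁻¹ *
        ∫ ξ : Metric.sphere (0 : EuclideanSpace ℝ (Fin d)) 1,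
          MvPolynomial.eval (ξ : EuclideanSpace ℝ (Fin d)) (Y m ℓ) *
          MvPolynomial.eval (ξ : EuclideanSpace ℝ (Fin d)) (Y m' ℓ') ∂(sphMeas d) =
        if m = m' ∧ ℓ = ℓ' then 1 else 0)
    -- the normalization constant `c_w`, with `⟨1,1⟩_w = 1`
    (cw : ℝ) (hcw : cw * (sphArea d * ∫ t in Sset, (φ t) ^ (d - 1) * w t) = 1) :
    ∀ n m ℓ : ℕ, m ≤ n → ℓ ∈ Finset.Icc 1 (harmDim d m) →
      -- (1) `φ(t)^m Y_ℓ^m(x/φ(t)) = Y_ℓ^m(x)`, so `S_{m,ℓ}^n` is a polynomial of degree ≤ n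
      (∀ (x : Fin d → ℝ) (t : ℝ), φ t ≠ 0 →
        (φ t) ^ m * MvPolynomial.eval (fun i => x i / φ t) (Y m ℓ) =
          MvPolynomial.eval x (Y m ℓ)) ∧
      (∃ P : MvPolynomial (Fin (d + 1)) ℝ, P.totalDegree ≤ n ∧
        ∀ (x : Fin d → ℝ) (t : ℝ), MvPolynomial.eval (Fin.snoc x t) P =
          (q m (n - m)).eval t * MvPolynomial.eval x (Y m ℓ)) ∧
      -- (2) orthogonality `⟨S_{m,ℓ}^n, S_{m',ℓ'}^{n'}⟩_w = h_m^n δ δ δ` with `h_m^n > 0`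
      (0 < cw * sphArea d *
          ∫ t in Sset, ((q m (n - m)).eval t) ^ 2 * (φ t) ^ (2 * m + d - 1) * w t) ∧
      (∀ n' m' ℓ' : ℕ, m' ≤ n' → ℓ' ∈ Finset.Icc 1 (harmDim d m') →
        cw * ∫ t in Sset, (φ t) ^ (d - 1) *
          (∫ ξ : Metric.sphere (0 : EuclideanSpace ℝ (Fin d)) 1,
            ((q m (n - m)).eval t *
              MvPolynomial.eval (φ t • (ξ : EuclideanSpace ℝ (Fin d))) (Y m ℓ)) *
            ((q m' (n' - m')).eval t *
              MvPolynomial.eval (φ t • (ξ : EuclideanSpace ℝ (Fin d))) (Y m' ℓ'))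
            ∂(sphMeas d)) * w t =
        if n = n' ∧ m = m' ∧ ℓ = ℓ' then
          cw * sphArea d *
            ∫ t in Sset, ((q m (n - m)).eval t) ^ 2 * (φ t) ^ (2 * m + d - 1) * w t
        else 0) := by
  classical
  -- basic positivity facts
  have hAnn : 0 ≤ sphArea d := ENNReal.toReal_nonneg
  have hcwA : 0 < cw * sphArea d := by
    have h1 : (cw * sphArea d) * (∫ t in Sset, (φ t) ^ (d - 1) * w t) = 1 := by
      rw [mul_assoc]; exact hcw
    have h2 : cw * sphArea d = 1 / ∫ t in Sset, (φ t) ^ (d - 1) * w t :=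
      eq_div_of_mul_eq (ne_of_gt hmass) h1
    rw [h2]
    positivity
  have hA0 : sphArea d ≠ 0 := by
    intro h
    rw [h, mul_zero] at hcwA
    exact lt_irrefl _ hcwA
  -- a polynomial expressing `φ^2`
  obtain ⟨p, hp⟩ : ∃ p : Polynomial ℝ, ∀ t ∈ Sset, φ t ^ 2 = p.eval t := by
    rcases hφ with ⟨c1, c0, h⟩ | ⟨c2, c1, c0, hnn, h⟩
    · exact ⟨(Polynomial.C c1 * Polynomial.X + Polynomial.C c0) ^ 2,
        fun t ht => by simp [h t ht]⟩
    · exact ⟨Polynomial.C c2 * Polynomial.X ^ 2 + Polynomial.C c1 * Polynomial.X +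
        Polynomial.C c0, fun t ht => by
          simp [h t ht, Real.sq_sqrt (hnn t ht)]⟩
  -- integrability of the base weight
  have hg : IntegrableOn (fun t => (φ t) ^ (d - 1) * w t) Sset := by
    simpa using hmom 0
  -- key integrability lemma
  have key : ∀ r : Polynomial ℝ,
      IntegrableOn (fun t => r.eval t * ((φ t) ^ (d - 1) * w t)) Sset := by
    intro r
    have hmeas : AEStronglyMeasurable (fun t => r.eval t * ((φ t) ^ (d - 1) * w t))
        (volume.restrict Sset) :=
      (r.continuous_aeval.aestronglyMeasurable).mul hg.aestronglyMeasurable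
    have hB : IntegrableOn (fun t => ∑ k ∈ Finset.range (r.natDegree + 1),
        |r.coeff k| * (|t| ^ k * (φ t) ^ (d - 1) * w t)) Sset :=
      integrable_finset_sum _ fun k _ => (hmom k).const_mul _
    refine hB.mono' hmeas ?_
    rw [ae_restrict_iff' hSopen.measurableSet]
    refine Filter.Eventually.of_forall fun t ht => ?_
    have hgt : 0 ≤ (φ t) ^ (d - 1) * w t :=
      mul_nonneg (pow_nonneg (hφ0 t ht) _) (hw0 t ht)
    have habs : |r.eval t| ≤ ∑ k ∈ Finset.range (r.natDegree + 1), |r.coeff k| * |t| ^ k := by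
      rw [Polynomial.eval_eq_sum_range (x := t)]
      refine (Finset.abs_sum_le_sum_abs _ _).trans ?_
      refine Finset.sum_le_sum fun k _ => ?_
      rw [abs_mul, abs_pow]
    calc ‖r.eval t * ((φ t) ^ (d - 1) * w t)‖
        = |r.eval t| * ((φ t) ^ (d - 1) * w t) := by
          rw [Real.norm_eq_abs, abs_mul, abs_of_nonneg hgt]
      _ ≤ (∑ k ∈ Finset.range (r.natDegree + 1), |r.coeff k| * |t| ^ k) *
            ((φ t) ^ (d - 1) * w t) := mul_le_mul_of_nonneg_right habs hgt
      _ = ∑ k ∈ Finset.range (r.natDegree + 1),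
            |r.coeff k| * (|t| ^ k * (φ t) ^ (d - 1) * w t) := by
          rw [Finset.sum_mul]
          exact Finset.sum_congr rfl fun k _ => by ring
  -- integrability for the weight with extra `φ^{2m}`
  have key2 : ∀ (M : ℕ) (r : Polynomial ℝ),
      IntegrableOn (fun t => r.eval t * (φ t) ^ (2 * M + d - 1) * w t) Sset := by
    intro M r
    refine (key (r * p ^ M)).congr_fun (fun t ht => ?_) hSopen.measurableSet
    have hE : 2 * M + d - 1 = 2 * M + (d - 1) := by omega
    have hφM : (φ t) ^ (2 * M) = (p.eval t) ^ M := by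
      rw [← hp t ht, ← pow_mul]
    simp only [Polynomial.eval_mul, Polynomial.eval_pow]
    rw [hE, pow_add, ← hφM]
    ring
  -- orthogonality of distinct `q`s
  have orth2 : ∀ (M j j' : ℕ), j ≠ j' →
      (∫ t in Sset, (q M j).eval t * (q M j').eval t * (φ t) ^ (2 * M + d - 1) * w t) = 0 := by
    have H : ∀ (M j j' : ℕ), j' < j →
        (∫ t in Sset, (q M j).eval t * (q M j').eval t * (φ t) ^ (2 * M + d - 1) * w t)
          = 0 := by
      intro M j j' hlt
      have hnd : (q M j').natDegree = j' := Polynomial.natDegree_eq_of_degree_eq_some (hqdeg M j')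
      have hrw : ∀ t : ℝ, (q M j).eval t * (q M j').eval t * (φ t) ^ (2 * M + d - 1) * w t
          = ∑ k ∈ Finset.range ((q M j').natDegree + 1),
              (q M j').coeff k * ((q M j).eval t * t ^ k * (φ t) ^ (2 * M + d - 1) * w t) := by
        intro t
        rw [Polynomial.eval_eq_sum_range (p := q M j') (x := t)]
        simp only [Finset.mul_sum, Finset.sum_mul]
        exact Finset.sum_congr rfl fun k _ => by ring
      have hint : ∀ k : ℕ, IntegrableOn
          (fun t => (q M j).eval t * t ^ k * (φ t) ^ (2 * M + d - 1) * w t) Sset := by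
        intro k
        refine (key2 M (q M j * Polynomial.X ^ k)).congr_fun (fun t _ => ?_)
          hSopen.measurableSet
        simp
      calc (∫ t in Sset, (q M j).eval t * (q M j').eval t * (φ t) ^ (2 * M + d - 1) * w t)
          = ∫ t in Sset, ∑ k ∈ Finset.range ((q M j').natDegree + 1),
              (q M j').coeff k * ((q M j).eval t * t ^ k * (φ t) ^ (2 * M + d - 1) * w t) :=
            integral_congr_ae (Filter.Eventually.of_forall fun t => hrw t)
        _ = ∑ k ∈ Finset.range ((q M j').natDegree + 1),
              ∫ t in Sset, (q M j').coeff k *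
                ((q M j).eval t * t ^ k * (φ t) ^ (2 * M + d - 1) * w t) :=
            integral_finset_sum _ fun k _ => ((hint k).const_mul _)
        _ = 0 := by
            refine Finset.sum_eq_zero fun k hk => ?_
            rw [integral_const_mul, hqorth M j k ?_, mul_zero]
            have := Finset.mem_range.mp hk
            omega
    intro M j j' hne
    rcases lt_or_gt_of_ne hne with h | h
    · refine Eq.trans ?_ (H M j' j h)
      exact integral_congr_ae (Filter.Eventually.of_forall fun t => by ring)
    · exact H M j j' h
  -- positivity of the diagonal terms
  have hposJ : ∀ (M j : ℕ), 0 < ∫ t in Sset,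
      ((q M j).eval t) ^ 2 * (φ t) ^ (2 * M + d - 1) * w t := by
    intro M j
    have hq0 : q M j ≠ 0 := by
      intro h
      have := hqdeg M j
      rw [h, Polynomial.degree_zero] at this
      exact absurd this (by simp)
    have hfint : IntegrableOn
        (fun t => ((q M j).eval t) ^ 2 * (φ t) ^ (2 * M + d - 1) * w t) Sset := by
      refine (key2 M ((q M j) ^ 2)).congr_fun (fun t _ => ?_) hSopen.measurableSet
      simp
    have hf0ae : 0 ≤ᵐ[volume.restrict Sset]
        fun t => ((q M j).eval t) ^ 2 * (φ t) ^ (2 * M + d - 1) * w t := by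
      refine (ae_restrict_iff' (p := fun t =>
        (0:ℝ) ≤ ((q M j).eval t) ^ 2 * (φ t) ^ (2 * M + d - 1) * w t)
        hSopen.measurableSet).mpr ?_
      refine Filter.Eventually.of_forall fun t ht => ?_
      exact mul_nonneg (mul_nonneg (sq_nonneg _) (pow_nonneg (hφ0 t ht) _)) (hw0 t ht)
    rw [setIntegral_pos_iff_support_of_nonneg_ae hf0ae hfint]
    -- from hmass, the support of the base weight has positive measure
    have hg0ae : 0 ≤ᵐ[volume.restrict Sset] fun t => (φ t) ^ (d - 1) * w t := by
      refine (ae_restrict_iff' (p := fun t => (0:ℝ) ≤ (φ t) ^ (d - 1) * w t)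
        hSopen.measurableSet).mpr ?_
      exact Filter.Eventually.of_forall fun t ht =>
        mul_nonneg (pow_nonneg (hφ0 t ht) _) (hw0 t ht)
    have hgsupp : 0 < volume
        (Function.support (fun t => (φ t) ^ (d - 1) * w t) ∩ Sset) :=
      (setIntegral_pos_iff_support_of_nonneg_ae hg0ae hg).mp hmass
    have hroots : volume {t : ℝ | (q M j).eval t = 0} = 0 :=
      (Polynomial.finite_setOf_isRoot hq0).measure_zero _
    have hsub : Function.support (fun t => (φ t) ^ (d - 1) * w t) ∩ Sset ⊆
        (Function.support
          (fun t => ((q M j).eval t) ^ 2 * (φ t) ^ (2 * M + d - 1) * w t) ∩ Sset) ∪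
          {t : ℝ | (q M j).eval t = 0} := by
      rintro t ⟨htg, htS⟩
      by_cases hqt : (q M j).eval t = 0
      · exact Or.inr hqt
      · refine Or.inl ⟨?_, htS⟩
        intro hf0
        apply htg
        rcases mul_eq_zero.mp hf0 with h1 | h1
        · rcases mul_eq_zero.mp h1 with h2 | h2
          · exact absurd (pow_eq_zero_iff (n := 2) (by norm_num) |>.mp h2) hqt
          · have hφ0' : φ t = 0 := by
              have : 2 * M + d - 1 ≠ 0 := by omega
              exact pow_eq_zero_iff this |>.mp h2
            simp only [hφ0']
            rw [zero_pow (by omega : d - 1 ≠ 0), zero_mul]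
        · simp only [h1, mul_zero]
    calc (0 : ENNReal)
        < volume (Function.support (fun t => (φ t) ^ (d - 1) * w t) ∩ Sset) := hgsupp
      _ ≤ volume ((Function.support
            (fun t => ((q M j).eval t) ^ 2 * (φ t) ^ (2 * M + d - 1) * w t) ∩ Sset) ∪
            {t : ℝ | (q M j).eval t = 0}) := measure_mono hsub
      _ ≤ volume (Function.support
            (fun t => ((q M j).eval t) ^ 2 * (φ t) ^ (2 * M + d - 1) * w t) ∩ Sset) +
            volume {t : ℝ | (q M j).eval t = 0} := measure_union_le _ _
      _ = volume (Function.support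
            (fun t => ((q M j).eval t) ^ 2 * (φ t) ^ (2 * M + d - 1) * w t) ∩ Sset) := by
          rw [hroots, add_zero]
  -- the main statement
  intro n m ℓ hm hℓ
  have hYm := hYhom m ℓ hℓ
  refine ⟨?_, ?_, ?_, ?_⟩
  · -- (1) homogeneity identity
    intro x t hφt
    have h2 : (φ t) • (fun i => x i / φ t) = x := by
      funext i
      simp only [Pi.smul_apply, smul_eq_mul]
      field_simp
    conv_rhs => rw [← h2]
    rw [homog_eval_smul hYm]
  · -- (2) polynomial of degree ≤ n
    have hnd : (q m (n - m)).natDegree = n - m :=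
      Polynomial.natDegree_eq_of_degree_eq_some (hqdeg m (n - m))
    refine ⟨rename Fin.castSucc (Y m ℓ) *
      ∑ k ∈ Finset.range ((q m (n - m)).natDegree + 1),
        MvPolynomial.C ((q m (n - m)).coeff k) * MvPolynomial.X (Fin.last d) ^ k, ?_, ?_⟩
    · refine (totalDegree_mul _ _).trans ?_
      have h1 : (rename (Fin.castSucc) (Y m ℓ)).totalDegree ≤ m :=
        (totalDegree_rename_le _ _).trans hYm.totalDegree_le
      have h2 : (∑ k ∈ Finset.range ((q m (n - m)).natDegree + 1),
          MvPolynomial.C ((q m (n - m)).coeff k) *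
            MvPolynomial.X (Fin.last d) ^ k).totalDegree ≤ n - m := by
        refine (totalDegree_finset_sum _ _).trans ?_
        refine Finset.sup_le fun k hk => ?_
        refine (totalDegree_mul _ _).trans ?_
        rw [totalDegree_C, totalDegree_X_pow]
        have := Finset.mem_range.mp hk
        omega
      have := add_le_add h1 h2
      omega
    · intro x t
      rw [map_mul, eval_rename]
      have hc : (Fin.snoc x t : Fin (d + 1) → ℝ) ∘ Fin.castSucc = x := by
        funext i; simp
      rw [hc, map_sum]
      have hsum : ∀ k ∈ Finset.range ((q m (n - m)).natDegree + 1),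
          MvPolynomial.eval (Fin.snoc x t)
            (MvPolynomial.C ((q m (n - m)).coeff k) * MvPolynomial.X (Fin.last d) ^ k)
          = (q m (n - m)).coeff k * t ^ k := by
        intro k _
        simp [Fin.snoc_last]
      rw [Finset.sum_congr rfl hsum, ← Polynomial.eval_eq_sum_range]
      ring
  · -- (3) positivity
    exact mul_pos hcwA (hposJ m (n - m))
  · -- (4) orthogonality
    intro n' m' ℓ' hm' hℓ'
    have hYm' := hYhom m' ℓ' hℓ'
    have hinner : ∀ t : ℝ,
        (∫ ξ : Metric.sphere (0 : EuclideanSpace ℝ (Fin d)) 1,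
          ((q m (n - m)).eval t *
            MvPolynomial.eval (φ t • (ξ : EuclideanSpace ℝ (Fin d))) (Y m ℓ)) *
          ((q m' (n' - m')).eval t *
            MvPolynomial.eval (φ t • (ξ : EuclideanSpace ℝ (Fin d))) (Y m' ℓ'))
          ∂(sphMeas d))
        = ((q m (n - m)).eval t * (q m' (n' - m')).eval t * (φ t) ^ (m + m')) *
            (sphArea d * if m = m' ∧ ℓ = ℓ' then 1 else 0) := by
      intro t
      have e1 : ∀ ξ : Metric.sphere (0 : EuclideanSpace ℝ (Fin d)) 1,
          ((q m (n - m)).eval t *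
            MvPolynomial.eval (φ t • (ξ : EuclideanSpace ℝ (Fin d))) (Y m ℓ)) *
          ((q m' (n' - m')).eval t *
            MvPolynomial.eval (φ t • (ξ : EuclideanSpace ℝ (Fin d))) (Y m' ℓ'))
          = ((q m (n - m)).eval t * (q m' (n' - m')).eval t * (φ t) ^ (m + m')) *
            (MvPolynomial.eval (ξ : EuclideanSpace ℝ (Fin d)) (Y m ℓ) *
             MvPolynomial.eval (ξ : EuclideanSpace ℝ (Fin d)) (Y m' ℓ')) := by
        intro ξ
        simp only [WithLp.ofLp_smul]
        rw [homog_eval_smul hYm (φ t) _, homog_eval_smul hYm' (φ t) _, pow_add]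
        ring
      have hI : (∫ ξ : Metric.sphere (0 : EuclideanSpace ℝ (Fin d)) 1,
          MvPolynomial.eval (ξ : EuclideanSpace ℝ (Fin d)) (Y m ℓ) *
          MvPolynomial.eval (ξ : EuclideanSpace ℝ (Fin d)) (Y m' ℓ') ∂(sphMeas d))
          = sphArea d * if m = m' ∧ ℓ = ℓ' then 1 else 0 := by
        rw [← hYorth m ℓ m' ℓ' hℓ hℓ', ← mul_assoc, mul_inv_cancel₀ hA0, one_mul]
      calc (∫ ξ : Metric.sphere (0 : EuclideanSpace ℝ (Fin d)) 1,
            ((q m (n - m)).eval t *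
              MvPolynomial.eval (φ t • (ξ : EuclideanSpace ℝ (Fin d))) (Y m ℓ)) *
            ((q m' (n' - m')).eval t *
              MvPolynomial.eval (φ t • (ξ : EuclideanSpace ℝ (Fin d))) (Y m' ℓ'))
            ∂(sphMeas d))
          = ∫ ξ : Metric.sphere (0 : EuclideanSpace ℝ (Fin d)) 1,
              ((q m (n - m)).eval t * (q m' (n' - m')).eval t * (φ t) ^ (m + m')) *
              (MvPolynomial.eval (ξ : EuclideanSpace ℝ (Fin d)) (Y m ℓ) *
               MvPolynomial.eval (ξ : EuclideanSpace ℝ (Fin d)) (Y m' ℓ')) ∂(sphMeas d) :=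
            integral_congr_ae (Filter.Eventually.of_forall e1)
        _ = ((q m (n - m)).eval t * (q m' (n' - m')).eval t * (φ t) ^ (m + m')) *
              ∫ ξ : Metric.sphere (0 : EuclideanSpace ℝ (Fin d)) 1,
                MvPolynomial.eval (ξ : EuclideanSpace ℝ (Fin d)) (Y m ℓ) *
                MvPolynomial.eval (ξ : EuclideanSpace ℝ (Fin d)) (Y m' ℓ') ∂(sphMeas d) :=
            integral_const_mul _ _
        _ = _ := by rw [hI]
    by_cases hmℓ : m = m' ∧ ℓ = ℓ'
    · obtain ⟨hm2, hl2⟩ := hmℓ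
      subst hm2; subst hl2
      have hstep : (∫ t in Sset, (φ t) ^ (d - 1) *
          (∫ ξ : Metric.sphere (0 : EuclideanSpace ℝ (Fin d)) 1,
            ((q m (n - m)).eval t *
              MvPolynomial.eval (φ t • (ξ : EuclideanSpace ℝ (Fin d))) (Y m ℓ)) *
            ((q m (n' - m)).eval t *
              MvPolynomial.eval (φ t • (ξ : EuclideanSpace ℝ (Fin d))) (Y m ℓ))
            ∂(sphMeas d)) * w t)
          = sphArea d * ∫ t in Sset,
              (q m (n - m)).eval t * (q m (n' - m)).eval t * (φ t) ^ (2 * m + d - 1) * w t := by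
        rw [← integral_const_mul]
        refine setIntegral_congr_fun hSopen.measurableSet fun t ht => ?_
        rw [hinner t, if_pos ⟨rfl, rfl⟩]
        have he : 2 * m + d - 1 = (m + m) + (d - 1) := by omega
        rw [he, pow_add]
        ring
      by_cases hnn : n = n'
      · subst hnn
        rw [if_pos ⟨rfl, rfl, rfl⟩, hstep]
        have hsq : (∫ t in Sset,
            (q m (n - m)).eval t * (q m (n - m)).eval t * (φ t) ^ (2 * m + d - 1) * w t)
            = ∫ t in Sset, ((q m (n - m)).eval t) ^ 2 * (φ t) ^ (2 * m + d - 1) * w t :=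
          integral_congr_ae (Filter.Eventually.of_forall fun t => by ring)
        rw [hsq]; ring
      · rw [if_neg (fun h => hnn h.1), hstep, orth2 m (n - m) (n' - m) (by omega),
          mul_zero, mul_zero]
    · have h0 : (∫ t in Sset, (φ t) ^ (d - 1) *
          (∫ ξ : Metric.sphere (0 : EuclideanSpace ℝ (Fin d)) 1,
            ((q m (n - m)).eval t *
              MvPolynomial.eval (φ t • (ξ : EuclideanSpace ℝ (Fin d))) (Y m ℓ)) *
            ((q m' (n' - m')).eval t *
              MvPolynomial.eval (φ t • (ξ : EuclideanSpace ℝ (Fin d))) (Y m' ℓ'))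
            ∂(sphMeas d)) * w t) = 0 := by
        have : ∀ t : ℝ, (φ t) ^ (d - 1) *
            (∫ ξ : Metric.sphere (0 : EuclideanSpace ℝ (Fin d)) 1,
              ((q m (n - m)).eval t *
                MvPolynomial.eval (φ t • (ξ : EuclideanSpace ℝ (Fin d))) (Y m ℓ)) *
              ((q m' (n' - m')).eval t *
                MvPolynomial.eval (φ t • (ξ : EuclideanSpace ℝ (Fin d))) (Y m' ℓ'))
              ∂(sphMeas d)) * w t = 0 := by
          intro t
          rw [hinner t, if_neg hmℓ]
          ring
        refine (integral_congr_ae (Filter.Eventually.of_forall this)).trans ?_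
        simp
      rw [h0, mul_zero, if_neg (fun h => hmℓ ⟨h.2.1, h.2.2⟩)]
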